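/- Let n ≥ 1. The map sending a permutation π of {1,…,n} to the pair ((s_1,…,s_r), w), where s_1, …, s_r are the lengths of the cycles of π listed in standard cycle order (cycles ordered by increasing smallest elements) and w is the word obtained from the standard cycle form of π by erasing parentheses, is a bijection from the set of permutations of {1,…,n} onto the set of pairs ((s_1,…,s_r), w) such that (s_1,…,s_r) is a composition of n (a finite sequence of positive integers with s_1 + … + s_r = n), w is a permutation word of {1,…,n}, and for each t ∈ {1,…,r} the right inversion vector of w vanishes at position p_t = 1 + s_1 + … + s_{t−1} (i.e., w_{p_t} < w_q for all q > p_t). -/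

import Mathlib

/-- The smallest element of the cycle of `π` containing `x`. -/
def cycleMin {n : ℕ} (π : Equiv.Perm (Fin n)) (x : Fin n) : Fin n :=
  (Finset.univ.filter fun y => π.SameCycle x y).min'
    ⟨x, by simp [Equiv.Perm.SameCycle.refl]⟩

/-- The number of steps needed to reach `x` from the smallest element of its cycle,
i.e. the least `l` with `π^l (cycleMin π x) = x`. -/
noncomputable def cycleIdx {n : ℕ} (π : Equiv.Perm (Fin n)) (x : Fin n) : ℕ :=
  sInf {l : ℕ | (π ^ l) (cycleMin π x) = x}

/-- `w` is the word obtained by erasing the parentheses in the standard cycle form of `π`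
(cycles ordered by increasing smallest elements, each cycle starting with its smallest
element): equivalently, `w` lists the elements of `{1,…,n}` sorted lexicographically by
(smallest element of their cycle, number of steps from that smallest element). -/
def IsStdCycleWord {n : ℕ} (π : Equiv.Perm (Fin n)) (w : Fin n → Fin n) : Prop :=
  Function.Bijective w ∧ ∀ p q : Fin n, p < q →
    cycleMin π (w p) < cycleMin π (w q) ∨
      (cycleMin π (w p) = cycleMin π (w q) ∧ cycleIdx π (w p) < cycleIdx π (w q))

/-- `sw = (s, w)` is the standard cycle data of `π`: `w` is the word of the standard cycle
form of `π` and `s` is the list of cycle lengths of `π` in standard cycle order; the latter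
is expressed by saying that the entries of `s` are positive, sum to `n`, and the positions
where cycles of `π` begin in `w` are exactly the partial sums `s_1 + … + s_{t-1}`. -/
def StdCycleData {n : ℕ} (π : Equiv.Perm (Fin n)) (sw : List ℕ × (Fin n → Fin n)) : Prop :=
  IsStdCycleWord π sw.2 ∧ (∀ a ∈ sw.1, 0 < a) ∧ sw.1.sum = n ∧
    ∀ p : Fin n, cycleIdx π (sw.2 p) = 0 ↔ ∃ t < sw.1.length, p.val = (sw.1.take t).sum

/-- `sw = (s, w)` is a pair consisting of a composition `s` of `n` and a permutation word
`w` of `{1,…,n}` whose right inversion vector vanishes at each position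
`p_t = 1 + s_1 + … + s_{t-1}` (0-indexed: `p_t = s_1 + … + s_{t-1}`), i.e. `w` has a
right-to-left minimum at each of these positions. -/
def GoodPair (n : ℕ) (sw : List ℕ × (Fin n → Fin n)) : Prop :=
  (∀ a ∈ sw.1, 0 < a) ∧ sw.1.sum = n ∧ Function.Bijective sw.2 ∧
    ∀ t < sw.1.length, ∀ p q : Fin n, p.val = (sw.1.take t).sum → p < q → sw.2 p < sw.2 q

namespace StdAux
open Equiv Finset


variable {n : ℕ} (π : Equiv.Perm (Fin n))

/-- cycle of x as a finset -/
def C (x : Fin n) : Finset (Fin n) := Finset.univ.filter fun y => π.SameCycle x y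

lemma mem_C {x y : Fin n} : y ∈ C π x ↔ π.SameCycle x y := by simp [C]

lemma self_mem_C (x : Fin n) : x ∈ C π x := (mem_C π).2 (Equiv.Perm.SameCycle.refl _ _)

lemma cycleMin_def (x : Fin n) :
    cycleMin π x = (C π x).min' ⟨x, self_mem_C π x⟩ := rfl

lemma sameCycle_cycleMin (x : Fin n) : π.SameCycle x (cycleMin π x) :=
  (mem_C π).1 (Finset.min'_mem _ _)

lemma cycleMin_le {x y : Fin n} (h : π.SameCycle x y) : cycleMin π x ≤ y :=
  Finset.min'_le _ _ ((mem_C π).2 h)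

lemma cycleMin_le_self (x : Fin n) : cycleMin π x ≤ x :=
  cycleMin_le π (Equiv.Perm.SameCycle.refl _ _)

lemma cycleMin_congr {x y : Fin n} (h : π.SameCycle x y) : cycleMin π x = cycleMin π y :=
  le_antisymm (cycleMin_le π (h.trans (sameCycle_cycleMin π y)))
    (cycleMin_le π (h.symm.trans (sameCycle_cycleMin π x)))

lemma C_congr {x y : Fin n} (h : π.SameCycle x y) : C π x = C π y := by
  ext z
  simp only [mem_C]
  exact ⟨fun hz => h.symm.trans hz, fun hz => h.trans hz⟩

lemma cycleMin_cycleMin (x : Fin n) : cycleMin π (cycleMin π x) = cycleMin π x :=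
  (cycleMin_congr π (sameCycle_cycleMin π x)).symm

lemma cycleIdx_set_nonempty (x : Fin n) :
    {l : ℕ | (π ^ l) (cycleMin π x) = x}.Nonempty := by
  obtain ⟨i, -, -, hi⟩ := Equiv.Perm.SameCycle.exists_pow_eq π (sameCycle_cycleMin π x).symm
  exact ⟨i, hi⟩

lemma pow_cycleIdx (x : Fin n) : (π ^ cycleIdx π x) (cycleMin π x) = x :=
  Nat.sInf_mem (cycleIdx_set_nonempty π x)

lemma key_inj {x y : Fin n} (h1 : cycleMin π x = cycleMin π y)
    (h2 : cycleIdx π x = cycleIdx π y) : x = y := by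
  rw [← pow_cycleIdx π x, ← pow_cycleIdx π y, h1, h2]

lemma isCycleOn_C (x : Fin n) : π.IsCycleOn (C π x : Set (Fin n)) := by
  constructor
  · refine ⟨fun y hy => ?_, π.injective.injOn, fun y hy => ⟨π⁻¹ y, ?_, by simp⟩⟩
    · simp only [Finset.coe_filter, Set.mem_setOf_eq, C, Finset.mem_univ, true_and] at hy ⊢
      exact Equiv.Perm.sameCycle_apply_right.2 hy
    · simp only [Finset.coe_filter, Set.mem_setOf_eq, C, Finset.mem_univ, true_and] at hy ⊢
      exact Equiv.Perm.sameCycle_symm_apply_right.2 hy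
  · intro a ha b hb
    simp only [Finset.coe_filter, Set.mem_setOf_eq, C, Finset.mem_univ, true_and] at ha hb
    exact ha.symm.trans hb

lemma pow_apply_eq_pow_apply_iff (x : Fin n) {a b : ℕ} :
    (π ^ a) x = (π ^ b) x ↔ a ≡ b [MOD (C π x).card] :=
  (isCycleOn_C π x).pow_apply_eq_pow_apply (self_mem_C π x)

lemma card_C_pos (x : Fin n) : 0 < (C π x).card :=
  Finset.card_pos.2 ⟨x, self_mem_C π x⟩

lemma cycleMin_pow (x : Fin n) (k : ℕ) : cycleMin π ((π ^ k) x) = cycleMin π x :=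
  (cycleMin_congr π ⟨k, by simp⟩).symm

lemma cycleIdx_pow_eq {m : Fin n} (hm : cycleMin π m = m) (k : ℕ) :
    cycleIdx π ((π ^ k) m) = k % (C π m).card := by
  have hmm : cycleMin π ((π ^ k) m) = m := (cycleMin_pow π m k).trans hm
  unfold cycleIdx
  rw [hmm]
  apply le_antisymm
  · apply Nat.sInf_le
    show (π ^ (k % (C π m).card)) m = (π ^ k) m
    exact (pow_apply_eq_pow_apply_iff π m).2 (Nat.mod_modEq k _)
  · apply le_csInf ⟨k % (C π m).card,
      (pow_apply_eq_pow_apply_iff π m).2 (Nat.mod_modEq k _)⟩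
    intro l hl
    have : l ≡ k [MOD (C π m).card] := (pow_apply_eq_pow_apply_iff π m).1 hl
    calc k % (C π m).card = l % (C π m).card := (Nat.ModEq.symm this)
      _ ≤ l := Nat.mod_le _ _

lemma cycleIdx_lt (x : Fin n) : cycleIdx π x < (C π x).card := by
  have h1 : C π x = C π (cycleMin π x) := C_congr π (sameCycle_cycleMin π x)
  have h2 := cycleIdx_pow_eq π (cycleMin_cycleMin π x) (cycleIdx π x)
  rw [pow_cycleIdx π x] at h2
  rw [h1]
  rw [h2]
  exact Nat.mod_lt _ (by rw [← h1]; exact card_C_pos π x)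

lemma cycleIdx_eq_zero_iff (x : Fin n) : cycleIdx π x = 0 ↔ cycleMin π x = x := by
  constructor
  · intro h
    have := pow_cycleIdx π x
    rwa [h, pow_zero, Equiv.Perm.coe_one, id_eq] at this
  · intro h
    exact Nat.sInf_eq_zero.2 (Or.inl (by simp [h]))

lemma sameCycle_iff_cycleMin_eq {x y : Fin n} :
    π.SameCycle x y ↔ cycleMin π x = cycleMin π y := by
  refine ⟨cycleMin_congr π, fun h => ?_⟩
  exact (sameCycle_cycleMin π x).trans (h ▸ (sameCycle_cycleMin π y).symm)


lemma take_sum_lt {s : List ℕ} (hpos : ∀ a ∈ s, 0 < a) {t t' : ℕ}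
    (h : t < t') (h' : t' ≤ s.length) : (s.take t).sum < (s.take t').sum := by
  induction t' with
  | zero => omega
  | succ u ih =>
    have hu : u < s.length := by omega
    have hgt : 0 < s[u] := hpos _ (s.getElem_mem hu)
    have hsucc := List.sum_take_succ s u hu
    rcases Nat.lt_or_ge t u with h1 | h1
    · have := ih h1 (le_of_lt hu)
      omega
    · have : t = u := by omega
      subst this
      omega

lemma take_sum_le {s : List ℕ} {t t' : ℕ} (h : t ≤ t') :
    (s.take t).sum ≤ (s.take t').sum := by
  have : s.take t = (s.take t').take t := by rw [List.take_take, Nat.min_eq_left h]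
  rw [this]
  conv_rhs => rw [← List.sum_take_add_sum_drop (s.take t') t]
  omega

lemma take_sum_lt_sum {s : List ℕ} (hpos : ∀ a ∈ s, 0 < a) {t : ℕ}
    (h : t < s.length) : (s.take t).sum < s.sum := by
  have := take_sum_lt hpos h (le_refl s.length)
  rwa [List.take_length] at this

lemma comp_unique {s s' : List ℕ} (hpos : ∀ a ∈ s, 0 < a) (hpos' : ∀ a ∈ s', 0 < a)
    (hsum : s.sum = s'.sum)
    (h : ∀ v : ℕ, (∃ t < s.length, v = (s.take t).sum) ↔ (∃ t < s'.length, v = (s'.take t).sum)) :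
    s = s' := by
  set f : Fin s.length → ℕ := fun t => (s.take t).sum with hf
  set g : Fin s'.length → ℕ := fun t => (s'.take t).sum with hg
  have hfm : StrictMono f := fun a b hab => take_sum_lt hpos hab b.2.le
  have hgm : StrictMono g := fun a b hab => take_sum_lt hpos' hab b.2.le
  have himg : Finset.univ.image f = Finset.univ.image g := by
    ext v
    simp only [Finset.mem_image, Finset.mem_univ, true_and]
    constructor
    · rintro ⟨t, rfl⟩
      obtain ⟨u, hu, huv⟩ := (h (f t)).1 ⟨t, t.2, rfl⟩
      exact ⟨⟨u, hu⟩, huv.symm⟩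
    · rintro ⟨t, rfl⟩
      obtain ⟨u, hu, huv⟩ := (h (g t)).2 ⟨t, t.2, rfl⟩
      exact ⟨⟨u, hu⟩, huv.symm⟩
  have hcardf : (Finset.univ.image f).card = s.length := by
    rw [Finset.card_image_of_injective _ hfm.injective, Finset.card_univ, Fintype.card_fin]
  have hcardg : (Finset.univ.image g).card = s'.length := by
    rw [Finset.card_image_of_injective _ hgm.injective, Finset.card_univ, Fintype.card_fin]
  have hlen : s.length = s'.length := by rw [← hcardf, himg, hcardg]
  have hfeq := Finset.orderEmbOfFin_unique hcardf (fun x => Finset.mem_image_of_mem f (Finset.mem_univ x)) hfm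
  set g' : Fin s.length → ℕ := fun t => g ⟨t.1, hlen ▸ t.2⟩ with hg'
  have hg'm : StrictMono g' := fun a b hab => hgm (by simpa using hab)
  have hgeq := Finset.orderEmbOfFin_unique hcardf
    (fun x => by
      rw [himg]
      exact Finset.mem_image_of_mem g (Finset.mem_univ _)) hg'm
  have hfg : ∀ t : Fin s.length, f t = g' t := fun t =>
    (congrFun hfeq t).trans (congrFun hgeq t).symm
  have htake : ∀ t ≤ s.length, (s.take t).sum = (s'.take t).sum := by
    intro t ht
    rcases Nat.lt_or_ge t s.length with h1 | h1
    · exact hfg ⟨t, h1⟩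
    · have ht1 : t = s.length := by omega
      subst ht1
      rw [List.take_length, hlen, List.take_length]
      exact hsum
  apply List.ext_getElem hlen
  intro i h1 h2
  have e1 := List.sum_take_succ s i h1
  have e2 := List.sum_take_succ s' i h2
  have q1 := htake i (le_of_lt h1)
  have q2 := htake (i+1) h1
  omega

lemma comp_exists {n : ℕ} (hn : 0 < n) (S : Finset (Fin n)) (h0 : (⟨0, hn⟩ : Fin n) ∈ S) :
    ∃ s : List ℕ, (∀ a ∈ s, 0 < a) ∧ s.sum = n ∧
      ∀ p : Fin n, p ∈ S ↔ ∃ t < s.length, p.val = (s.take t).sum := by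
  set r := S.card with hr
  have e := S.orderIsoOfFin (k := r) rfl
  set f : ℕ → ℕ := fun t => if h : t < r then ((e ⟨t, h⟩ : Fin n)).val else n with hfdef
  have hstep : ∀ t, t < r → f t < f (t + 1) := by
    intro t ht
    simp only [hfdef, dif_pos ht]
    rcases Nat.lt_or_ge (t+1) r with h1 | h1
    · rw [dif_pos h1]
      have : (⟨t, ht⟩ : Fin r) < ⟨t+1, h1⟩ := by simp [Fin.lt_iff_val_lt_val]
      exact (e.lt_iff_lt.2 this)
    · rw [dif_neg (by omega)]
      exact (e ⟨t, ht⟩ : Fin n).2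
  have hf0 : f 0 = 0 := by
    have hrpos : 0 < r := Finset.card_pos.2 ⟨_, h0⟩
    simp only [hfdef, dif_pos hrpos]
    have h1 : (e ⟨0, hrpos⟩ : Fin n) ≤ ⟨0, hn⟩ := by
      have := e.symm ⟨⟨0, hn⟩, h0⟩
      have h2 : e ⟨0, hrpos⟩ ≤ e (e.symm ⟨⟨0, hn⟩, h0⟩) := e.monotone (by simp [Fin.le_def])
      rw [e.apply_symm_apply] at h2
      exact h2
    simp only [Fin.le_def] at h1
    omega
  set s : List ℕ := List.ofFn (fun t : Fin r => f (t+1) - f t) with hs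
  have hlen : s.length = r := by simp [hs]
  have htake : ∀ t ≤ r, (s.take t).sum = f t := by
    intro t ht
    induction t with
    | zero => simp [hf0]
    | succ u ih =>
      have hu : u < r := ht
      have hu' : u < s.length := by omega
      rw [List.sum_take_succ s u hu', ih (le_of_lt hu)]
      have : s[u] = f (u+1) - f u := by simp [hs]
      rw [this]
      have := hstep u hu
      omega
  refine ⟨s, ?_, ?_, ?_⟩
  · intro a ha
    rw [hs, List.mem_ofFn] at ha
    obtain ⟨t, rfl⟩ := ha
    have := hstep t.1 t.2
    show 0 < f (t.1 + 1) - f t.1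
    omega
  · have h1 : s.sum = (s.take r).sum := by rw [← hlen, List.take_length]
    rw [h1, htake r le_rfl]
    simp [hfdef]
  · intro p
    constructor
    · intro hp
      obtain ⟨t, ht⟩ : ∃ t : Fin r, (e t : Fin n) = p := ⟨e.symm ⟨p, hp⟩, by simp⟩
      refine ⟨t.1, by omega, ?_⟩
      rw [htake t.1 t.2.le]
      simp only [hfdef, dif_pos t.2, ← ht]
    · rintro ⟨t, ht, hv⟩
      rw [hlen] at ht
      rw [htake t ht.le] at hv
      simp only [hfdef, dif_pos ht] at hv
      have : p = (e ⟨t, ht⟩ : Fin n) := Fin.ext hv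
      rw [this]
      exact (e ⟨t, ht⟩).2


variable {n : ℕ}

/-- start of the block of `p`: largest element of `S` that is `≤ p` (junk value if none). -/
def start (S : Finset (Fin n)) (p : Fin n) : Fin n :=
  if h : (S.filter (fun q => q ≤ p)).Nonempty then (S.filter (fun q => q ≤ p)).max' h else p

/-- one past the end (in `ℕ`) of the block of `p`. -/
noncomputable def stopN (S : Finset (Fin n)) (p : Fin n) : ℕ :=
  sInf {m : ℕ | (start S p).val < m ∧ (m = n ∨ ∃ q : Fin n, q ∈ S ∧ q.val = m)}

/-- successor map whose cycles are the blocks. -/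
noncomputable def nxt (S : Finset (Fin n)) (p : Fin n) : Fin n :=
  if h : p.val + 1 < stopN S p then ⟨p.val + 1, lt_of_lt_of_le h (Nat.sInf_le ⟨(start S p).isLt, Or.inl rfl⟩)⟩
  else start S p

variable {S : Finset (Fin n)} (h0 : ∃ z ∈ S, z.val = 0)

section
include h0

lemma filter_ne (p : Fin n) : (S.filter (fun q => q ≤ p)).Nonempty := by
  obtain ⟨z, hz, hz0⟩ := h0
  exact ⟨z, Finset.mem_filter.2 ⟨hz, by simp [Fin.le_def, hz0]⟩⟩

lemma start_def (p : Fin n) : start S p = (S.filter (fun q => q ≤ p)).max' (filter_ne h0 p) := by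
  rw [start, dif_pos]

lemma start_mem (p : Fin n) : start S p ∈ S := by
  rw [start_def h0]
  have := Finset.max'_mem (S.filter (fun q => q ≤ p)) (filter_ne h0 p)
  exact (Finset.mem_filter.1 this).1

lemma start_le (p : Fin n) : start S p ≤ p := by
  rw [start_def h0]
  have := Finset.max'_mem (S.filter (fun q => q ≤ p)) (filter_ne h0 p)
  exact (Finset.mem_filter.1 this).2

lemma le_start {q p : Fin n} (hq : q ∈ S) (hqp : q ≤ p) : q ≤ start S p := by
  rw [start_def h0]
  exact Finset.le_max' (S.filter (fun q => q ≤ p)) q (Finset.mem_filter.2 ⟨hq, hqp⟩)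

lemma start_eq_self {p : Fin n} (hp : p ∈ S) : start S p = p :=
  le_antisymm (start_le h0 p) (le_start h0 hp le_rfl)

lemma mem_iff_start (p : Fin n) : p ∈ S ↔ start S p = p :=
  ⟨start_eq_self h0, fun h => h ▸ start_mem h0 p⟩

lemma start_mono {p q : Fin n} (h : p ≤ q) : start S p ≤ start S q :=
  le_start h0 (start_mem h0 p) ((start_le h0 p).trans h)

end

lemma stopN_le (p : Fin n) : stopN S p ≤ n :=
  Nat.sInf_le ⟨(start S p).isLt, Or.inl rfl⟩

lemma stopN_spec (p : Fin n) :
    (start S p).val < stopN S p ∧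
      (stopN S p = n ∨ ∃ q : Fin n, q ∈ S ∧ q.val = stopN S p) :=
  Nat.sInf_mem (⟨n, (start S p).isLt, Or.inl rfl⟩ :
    Set.Nonempty {m : ℕ | (start S p).val < m ∧ (m = n ∨ ∃ q : Fin n, q ∈ S ∧ q.val = m)})

include h0 in
lemma block_iff (p q : Fin n) :
    start S q = start S p ↔ (start S p).val ≤ q.val ∧ q.val < stopN S p := by
  constructor
  · intro h
    refine ⟨by rw [← h]; exact start_le h0 q, ?_⟩
    by_contra hb
    push_neg at hb
    obtain ⟨hlt, hcase⟩ := stopN_spec (S := S) p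
    rcases hcase with hcase | ⟨q', hq', hq'v⟩
    · have := q.isLt; omega
    · have hq'q : q' ≤ q := by rw [Fin.le_def]; omega
      have h2 := le_start h0 hq' hq'q
      rw [h, Fin.le_def] at h2
      omega
  · rintro ⟨h1, h2⟩
    have hsp : start S p ≤ q := by rw [Fin.le_def]; exact h1
    have hle : start S p ≤ start S q := le_start h0 (start_mem h0 p) hsp
    rcases eq_or_lt_of_le hle with h | h
    · exact h.symm
    · exfalso
      have hmem : (start S q).val ∈ {m : ℕ | (start S p).val < m ∧
          (m = n ∨ ∃ q' : Fin n, q' ∈ S ∧ q'.val = m)} :=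
        ⟨by rw [Fin.lt_def] at h; exact h, Or.inr ⟨start S q, start_mem h0 q, rfl⟩⟩
      have h3 : stopN S p ≤ (start S q).val := Nat.sInf_le hmem
      have h4 := start_le h0 q
      rw [Fin.le_def] at h4
      omega

include h0 in
lemma self_block (p : Fin n) : (start S p).val ≤ p.val ∧ p.val < stopN S p := by
  rw [← block_iff h0]

lemma stopN_congr {p q : Fin n} (h : start S q = start S p) : stopN S q = stopN S p := by
  unfold stopN
  rw [h]

include h0 in
lemma start_nxt (p : Fin n) : start S (nxt S p) = start S p := by
  unfold nxt
  split_ifs with h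
  · exact (block_iff h0 p _).2 ⟨by have := self_block h0 p; simp; omega, by simpa using h⟩
  · exact start_eq_self h0 (start_mem h0 p)

include h0 in
lemma nxt_inj : Function.Injective (nxt S) := by
  have key : ∀ p q : Fin n, (p.val + 1 < stopN S p) → ¬(q.val + 1 < stopN S q) →
      nxt S p = nxt S q → False := by
    intro p q hp hq h
    unfold nxt at h
    rw [dif_pos hp, dif_neg hq] at h
    have hv : (start S q).val = p.val + 1 := by rw [← h]
    have hq1 : start S q ∈ S := start_mem h0 q
    have hq2 : start S (start S q) = start S q := start_eq_self h0 hq1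
    have hq3 : start S (start S q) = start S p := by
      apply (block_iff h0 p _).2
      have := self_block h0 p
      rw [hv]
      omega
    rw [hq2] at hq3
    have h4 := self_block h0 p
    rw [← hq3] at h4
    omega
  intro p q h
  by_cases hp : p.val + 1 < stopN S p <;> by_cases hq : q.val + 1 < stopN S q
  · unfold nxt at h
    rw [dif_pos hp, dif_pos hq] at h
    rw [Fin.ext_iff] at h ⊢
    simpa using h
  · exact absurd h (fun h => key p q hp hq h)
  · exact absurd h.symm (fun h => key q p hq hp h)
  · unfold nxt at h
    rw [dif_neg hp, dif_neg hq] at h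
    have hsp := self_block h0 p
    have hsq := self_block h0 q
    have hstop : stopN S q = stopN S p := stopN_congr h.symm
    rw [Fin.ext_iff] at h ⊢
    omega

include h0 in
lemma iter_start {p : Fin n} {j : ℕ} (hj : (start S p).val + j < stopN S p) :
    (nxt S)^[j] (start S p) = ⟨(start S p).val + j, by have := stopN_le (S := S) p; omega⟩ := by
  induction j with
  | zero => simp
  | succ k ih =>
    rw [Function.iterate_succ_apply', ih (by omega)]
    have hbq : start S (⟨(start S p).val + k, by have := stopN_le (S := S) p; omega⟩ : Fin n) = start S p :=
      (block_iff h0 p _).2 ⟨by simp, by simp; omega⟩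
    have hstop := stopN_congr hbq
    unfold nxt
    rw [dif_pos (by simp [hstop]; omega)]
    exact Fin.ext (by simp only [Fin.val_mk]; omega)

include h0 in
lemma iter_wrap (p : Fin n) :
    (nxt S)^[stopN S p - (start S p).val] (start S p) = start S p := by
  have hab : (start S p).val < stopN S p := (stopN_spec (S := S) p).1
  have hbn := stopN_le (S := S) p
  have h1 : stopN S p - (start S p).val = (stopN S p - (start S p).val - 1) + 1 := by omega
  rw [h1, Function.iterate_succ_apply', iter_start h0 (by omega)]
  have hbq : start S (⟨(start S p).val + (stopN S p - (start S p).val - 1), by omega⟩ : Fin n) = start S p :=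
    (block_iff h0 p _).2 ⟨by simp, by simp; omega⟩
  have hstop := stopN_congr hbq
  unfold nxt
  rw [dif_neg (by simp [hstop]; omega), hbq]

include h0 in
lemma iter_mod (p : Fin n) (l : ℕ) :
    (nxt S)^[l] (start S p) =
      ⟨(start S p).val + l % (stopN S p - (start S p).val),
        by have h1 := (stopN_spec (S := S) p).1; have h2 := stopN_le (S := S) p;
           have := Nat.mod_lt l (y := stopN S p - (start S p).val) (by omega); omega⟩ := by
  have hab : (start S p).val < stopN S p := (stopN_spec (S := S) p).1
  induction l using Nat.strong_induction_on with
  | _ l ih =>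
    rcases Nat.lt_or_ge l (stopN S p - (start S p).val) with h | h
    · exact (iter_start h0 (by omega)).trans (Fin.ext (by simp [Nat.mod_eq_of_lt h]))
    · have hsplit : (nxt S)^[l] (start S p) = (nxt S)^[l - (stopN S p - (start S p).val)] (start S p) := by
        conv_lhs => rw [show l = (l - (stopN S p - (start S p).val)) + (stopN S p - (start S p).val) by omega]
        rw [Function.iterate_add_apply, iter_wrap h0]
      rw [hsplit, ih _ (by omega)]
      apply Fin.ext
      simp only []
      congr 1
      conv_rhs => rw [show l = (l - (stopN S p - (start S p).val)) + (stopN S p - (start S p).val) by omega]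
      rw [Nat.add_mod_right]

include h0 in
lemma p_eq_iter (p : Fin n) :
    (nxt S)^[p.val - (start S p).val] (start S p) = p := by
  have h := self_block h0 p
  rw [iter_start h0 (by omega)]
  exact Fin.ext (by simp; omega)

include h0 in
lemma card_block (p : Fin n) :
    (Finset.univ.filter fun q => start S q = start S p).card = stopN S p - (start S p).val := by
  have hbn := stopN_le (S := S) p
  rw [← Nat.card_Ico (start S p).val (stopN S p)]
  apply Finset.card_bij (fun q _ => q.val)
  · intro q hq
    simp only [Finset.mem_filter, Finset.mem_univ, true_and] at hq
    rw [block_iff h0] at hq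
    simp only [Finset.mem_Ico]
    omega
  · intro q1 hq1 q2 hq2 h
    exact Fin.ext h
  · intro m hm
    simp only [Finset.mem_Ico] at hm
    refine ⟨⟨m, by omega⟩, ?_, rfl⟩
    simp only [Finset.mem_filter, Finset.mem_univ, true_and]
    exact (block_iff h0 p _).2 (by simp; omega)



variable {n : ℕ} {s : List ℕ} {w : Fin n → Fin n}

/-- positions where blocks begin -/
def bS (s : List ℕ) (n : ℕ) : Finset (Fin n) :=
  Finset.univ.filter fun p => ∃ t < s.length, p.val = (s.take t).sum

lemma mem_bS {p : Fin n} : p ∈ bS s n ↔ ∃ t < s.length, p.val = (s.take t).sum := by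
  simp [bS]

lemma bS_h0 (hn : 0 < n) (hsum : s.sum = n) : ∃ z ∈ bS s n, z.val = 0 := by
  refine ⟨⟨0, hn⟩, mem_bS.2 ⟨0, ?_, by simp⟩, rfl⟩
  cases s with
  | nil => simp at hsum; omega
  | cons a l => simp

section
variable (hn : 0 < n) (hw : Function.Bijective w) (hpos : ∀ a ∈ s, 0 < a)
  (hsum : s.sum = n)
  (hgood : ∀ t < s.length, ∀ p q : Fin n, p.val = (s.take t).sum → p < q → w p < w q)

include hgood in
lemma bS_min {p q : Fin n} (hp : p ∈ bS s n) (hpq : p < q) : w p < w q := by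
  obtain ⟨t, ht, hv⟩ := mem_bS.1 hp
  exact hgood t ht p q hv hpq

/-- the permutation constructed from a good pair -/
noncomputable def mkPerm (hn : 0 < n) (hw : Function.Bijective w) (hsum : s.sum = n) :
    Equiv.Perm (Fin n) :=
  ((Equiv.ofBijective w hw).symm.trans
    (Equiv.ofBijective (nxt (bS s n))
      ((Finite.injective_iff_bijective).1 (nxt_inj (bS_h0 hn hsum))))).trans
    (Equiv.ofBijective w hw)

lemma mkPerm_apply (p : Fin n) : mkPerm hn hw hsum (w p) = w (nxt (bS s n) p) := by
  unfold mkPerm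
  simp only [Equiv.trans_apply]
  congr 1
  have : (Equiv.ofBijective w hw).symm (w p) = p := by
    apply (Equiv.ofBijective w hw).injective
    simp [Equiv.ofBijective_apply]
  rw [this]
  rfl

lemma mkPerm_pow (l : ℕ) (p : Fin n) :
    ((mkPerm hn hw hsum) ^ l) (w p) = w ((nxt (bS s n))^[l] p) := by
  induction l generalizing p with
  | zero => simp
  | succ k ih =>
    rw [pow_succ, Equiv.Perm.mul_apply, mkPerm_apply hn hw hsum, ih, Function.iterate_succ_apply]

lemma start_iter (h0 : ∃ z ∈ bS s n, z.val = 0) (l : ℕ) (p : Fin n) :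
    start (bS s n) ((nxt (bS s n))^[l] p) = start (bS s n) p := by
  induction l with
  | zero => rfl
  | succ k ih => rw [Function.iterate_succ_apply', start_nxt h0, ih]

lemma mkPerm_sameCycle (p q : Fin n) :
    (mkPerm hn hw hsum).SameCycle (w p) (w q) ↔
      start (bS s n) q = start (bS s n) p := by
  have h0 := bS_h0 (s := s) hn hsum
  constructor
  · intro h
    obtain ⟨i, -, -, hi⟩ := Equiv.Perm.SameCycle.exists_pow_eq _ h
    rw [mkPerm_pow hn hw hsum] at hi
    have := hw.1 hi
    rw [← this, start_iter h0]
  · intro h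
    have h1 : (nxt (bS s n))^[q.val - (start (bS s n) q).val] (start (bS s n) q) = q :=
      p_eq_iter h0 q
    have h2 : (nxt (bS s n))^[p.val - (start (bS s n) p).val] (start (bS s n) p) = p :=
      p_eq_iter h0 p
    have c1 : (mkPerm hn hw hsum).SameCycle (w (start (bS s n) p)) (w q) := by
      refine ⟨(q.val - (start (bS s n) q).val : ℕ), ?_⟩
      rw [zpow_natCast, mkPerm_pow hn hw hsum, ← h, h1]
    have c2 : (mkPerm hn hw hsum).SameCycle (w (start (bS s n) p)) (w p) := by
      refine ⟨(p.val - (start (bS s n) p).val : ℕ), ?_⟩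
      rw [zpow_natCast, mkPerm_pow hn hw hsum, h2]
    exact c2.symm.trans c1

include hgood in
lemma mkPerm_cycleMin (p : Fin n) :
    cycleMin (mkPerm hn hw hsum) (w p) = w (start (bS s n) p) := by
  have h0 := bS_h0 (s := s) hn hsum
  apply le_antisymm
  · apply cycleMin_le
    rw [mkPerm_sameCycle hn hw hsum]
    exact start_eq_self h0 (start_mem h0 p)
  · have hmem := Finset.min'_mem (C (mkPerm hn hw hsum) (w p))
      ⟨w p, self_mem_C _ (w p)⟩
    rw [← cycleMin_def] at hmem
    rw [mem_C] at hmem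
    obtain ⟨q, hq⟩ := hw.2 (cycleMin (mkPerm hn hw hsum) (w p))
    rw [← hq] at hmem ⊢
    rw [mkPerm_sameCycle hn hw hsum] at hmem
    rcases eq_or_lt_of_le (show start (bS s n) p ≤ q by
      rw [Fin.le_def]; exact ((block_iff h0 p q).1 hmem).1) with h | h
    · rw [h]
    · exact le_of_lt (bS_min hgood (start_mem h0 p) h)

include hgood in
lemma mkPerm_cycleIdx (p : Fin n) :
    cycleIdx (mkPerm hn hw hsum) (w p) = p.val - (start (bS s n) p).val := by
  have h0 := bS_h0 (s := s) hn hsum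
  have hsb := self_block h0 p
  have hbn := stopN_le (S := bS s n) p
  unfold cycleIdx
  rw [mkPerm_cycleMin hn hw hsum hgood]
  have hset : ∀ l : ℕ, ((mkPerm hn hw hsum ^ l) (w (start (bS s n) p)) = w p) ↔
      ((start (bS s n) p).val + l % (stopN (bS s n) p - (start (bS s n) p).val) = p.val) := by
    intro l
    rw [mkPerm_pow hn hw hsum]
    constructor
    · intro h
      have := hw.1 h
      rw [iter_mod h0] at this
      exact congrArg Fin.val this
    · intro h
      rw [iter_mod h0]
      congr 1
      exact Fin.ext h
  apply le_antisymm
  · apply Nat.sInf_le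
    rw [Set.mem_setOf_eq, hset, Nat.mod_eq_of_lt (by omega)]
    omega
  · apply le_csInf
    · exact ⟨p.val - (start (bS s n) p).val,
        by rw [Set.mem_setOf_eq, hset, Nat.mod_eq_of_lt (by omega)]; omega⟩
    · intro l hl
      rw [Set.mem_setOf_eq, hset] at hl
      have := Nat.mod_le l (stopN (bS s n) p - (start (bS s n) p).val)
      omega

include hpos hgood in
lemma mkPerm_std : StdCycleData (mkPerm hn hw hsum) (s, w) := by
  have h0 := bS_h0 (s := s) hn hsum
  refine ⟨⟨hw, ?_⟩, hpos, hsum, ?_⟩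
  · intro p q hpq
    rcases eq_or_lt_of_le (start_mono h0 (le_of_lt hpq)) with h | h
    · right
      constructor
      · rw [mkPerm_cycleMin hn hw hsum hgood, mkPerm_cycleMin hn hw hsum hgood, h]
      · rw [mkPerm_cycleIdx hn hw hsum hgood, mkPerm_cycleIdx hn hw hsum hgood, ← h]
        have h1 := self_block h0 p
        rw [Fin.lt_def] at hpq
        omega
    · left
      rw [mkPerm_cycleMin hn hw hsum hgood, mkPerm_cycleMin hn hw hsum hgood]
      exact bS_min hgood (start_mem h0 p) h
  · intro p
    rw [mkPerm_cycleIdx hn hw hsum hgood, ← mem_bS (p := p)]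
    have h1 := self_block h0 p
    rw [mem_iff_start h0, Fin.ext_iff]
    omega

end


variable {n : ℕ} {s : List ℕ} {w : Fin n → Fin n} {π : Equiv.Perm (Fin n)}

lemma klt_pos (hstd : StdCycleData π (s, w)) {p q : Fin n}
    (h : cycleMin π (w p) < cycleMin π (w q) ∨
      (cycleMin π (w p) = cycleMin π (w q) ∧ cycleIdx π (w p) < cycleIdx π (w q))) :
    p < q := by
  rcases lt_trichotomy p q with h1 | h1 | h1
  · exact h1
  · exfalso
    rw [h1] at h
    rcases h with h | ⟨-, h⟩
    · exact lt_irrefl _ h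
    · omega
  · exfalso
    have h2 : cycleMin π (w q) < cycleMin π (w p) ∨
        (cycleMin π (w q) = cycleMin π (w p) ∧ cycleIdx π (w q) < cycleIdx π (w p)) :=
      hstd.1.2 q p h1
    rcases h with h | ⟨he, hi⟩ <;> rcases h2 with h2 | ⟨he2, hi2⟩
    · exact lt_asymm h h2
    · rw [he2] at h; exact lt_irrefl _ h
    · rw [he] at h2; exact lt_irrefl _ h2
    · omega

lemma tgt_lt {S : Finset (Fin n)} (h0 : ∃ z ∈ S, z.val = 0) (p : Fin n) (j : ℕ) :
    (start S p).val + j % (stopN S p - (start S p).val) < n := by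
  have h1 := (stopN_spec (S := S) p).1
  have h2 := stopN_le (S := S) p
  have h3 := Nat.mod_lt j (y := stopN S p - (start S p).val) (by omega)
  omega

set_option maxHeartbeats 1000000 in
lemma claimA (hn : 0 < n) (hstd : StdCycleData π (s, w)) (p : Fin n) :
    cycleMin π (w p) = w (start (bS s n) p) ∧
      cycleIdx π (w p) = p.val - (start (bS s n) p).val := by
  have h0 := bS_h0 (s := s) hn hstd.2.2.1
  have hw : Function.Bijective w := hstd.1.1
  have hlex : ∀ p q : Fin n, p < q → cycleMin π (w p) < cycleMin π (w q) ∨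
      (cycleMin π (w p) = cycleMin π (w q) ∧ cycleIdx π (w p) < cycleIdx π (w q)) := hstd.1.2
  have hiff : ∀ p : Fin n, cycleIdx π (w p) = 0 ↔ ∃ t < s.length, p.val = (s.take t).sum :=
    hstd.2.2.2
  have hiff : ∀ p : Fin n, cycleIdx π (w p) = 0 ↔ p ∈ bS s n :=
    fun p => (hiff p).trans (mem_bS).symm
  suffices main : ∀ k : ℕ, ∀ p : Fin n, p.val = k → cycleMin π (w p) = w (start (bS s n) p) ∧
      cycleIdx π (w p) = p.val - (start (bS s n) p).val from main p.val p rfl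
  intro k
  induction k using Nat.strong_induction_on with
  | _ k ih =>
  intro p hpk
  by_cases hp : p ∈ bS s n
  · have i0 : cycleIdx π (w p) = 0 := (hiff p).2 hp
    have hmin : cycleMin π (w p) = w p := (cycleIdx_eq_zero_iff π (w p)).1 i0
    rw [start_eq_self h0 hp]
    exact ⟨hmin, by omega⟩
  · have hzv : 0 < p.val := by
      rcases Nat.eq_zero_or_pos p.val with h | h
      · exfalso
        obtain ⟨z, hz, hzv⟩ := h0
        have : z = p := Fin.ext (by omega)
        exact hp (this ▸ hz)
      · exact h
    have hsb := self_block h0 p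
    have hap : (start (bS s n) p).val < p.val := by
      rcases eq_or_lt_of_le hsb.1 with h | h
      · exfalso; exact hp ((mem_iff_start h0 p).2 (Fin.ext h))
      · exact h
    set a := (start (bS s n) p).val with ha
    have hvp' : p.val - 1 < n := by omega
    set p' : Fin n := ⟨p.val - 1, hvp'⟩ with hp'def
    have hp'v : p'.val = p.val - 1 := rfl
    have hp'lt : p' < p := by rw [Fin.lt_def, hp'v]; omega
    have hstart' : start (bS s n) p' = start (bS s n) p :=
      (block_iff h0 p p').2 ⟨by rw [hp'v]; omega, by rw [hp'v]; omega⟩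
    obtain ⟨hm', hi'⟩ := ih p'.val (by rw [hp'v]; omega) p' rfl
    rw [hstart'] at hm' hi'
    rw [hp'v] at hi'
    have hi'' : cycleIdx π (w p') = p.val - 1 - a := hi'
    have hmfix : cycleMin π (w (start (bS s n) p)) = w (start (bS s n) p) := by
      rw [← hm', cycleMin_cycleMin]
    have hCeq : C π (w p') = C π (w (start (bS s n) p)) :=
      C_congr π ((sameCycle_iff_cycleMin_eq π).2 (by rw [hm', hmfix]))
    have hiL : p.val - 1 - a < (C π (w (start (bS s n) p))).card := by
      have hcc := cycleIdx_lt π (w p')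
      rw [hCeq] at hcc
      omega
    have hk1 := hlex _ _ hp'lt
    rw [hm', hi''] at hk1
    rcases Nat.lt_or_ge (p.val - 1 - a + 1) ((C π (w (start (bS s n) p))).card) with hcase | hcase
    · -- the next element of the cycle exists
      have hzmin : cycleMin π ((π ^ (p.val - a)) (w (start (bS s n) p))) = w (start (bS s n) p) := by
        rw [cycleMin_pow, hmfix]
      have hzidx : cycleIdx π ((π ^ (p.val - a)) (w (start (bS s n) p))) = p.val - a := by
        rw [cycleIdx_pow_eq π hmfix, Nat.mod_eq_of_lt (by omega)]
      obtain ⟨q, hq⟩ := hw.2 ((π ^ (p.val - a)) (w (start (bS s n) p)))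
      have hpq' : p' < q := by
        apply klt_pos hstd
        rw [hq, hm', hzmin, hi'', hzidx]
        right
        exact ⟨rfl, by omega⟩
      have hqeq : q = p := by
        by_contra hne
        have hplt : p < q := by
          rw [Fin.lt_def] at hpq' ⊢
          rw [hp'v] at hpq'
          rcases Nat.lt_or_ge p.val q.val with h | h
          · exact h
          · exfalso; exact hne (Fin.ext (by omega))
        have hk2 := hlex p q hplt
        rw [hq, hzmin, hzidx] at hk2
        rcases hk1 with k1 | ⟨k1e, k1i⟩ <;> rcases hk2 with k2 | ⟨k2e, k2i⟩
        · exact lt_asymm k1 k2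
        · rw [k2e] at k1; exact lt_irrefl _ k1
        · rw [← k1e] at k2; exact lt_irrefl _ k2
        · omega
      rw [hqeq] at hq
      rw [hq]
      exact ⟨hzmin, by rw [hzidx]⟩
    · -- cycle exhausted: p must start a new cycle, contradiction
      exfalso
      have hidx0 : cycleIdx π (w p) = 0 := by
        by_contra hnz
        obtain ⟨q, hq⟩ := hw.2 (cycleMin π (w p))
        have hqmin : cycleMin π (w q) = cycleMin π (w p) := by rw [hq, cycleMin_cycleMin]
        have hqidx : cycleIdx π (w q) = 0 :=
          (cycleIdx_eq_zero_iff π (w q)).2 (by rw [hq, cycleMin_cycleMin])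
        have hqp : q < p := klt_pos hstd (Or.inr ⟨hqmin, by omega⟩)
        have hmz : w (start (bS s n) p) ≠ cycleMin π (w p) := by
          intro he
          have hC2 : C π (w p) = C π (w (start (bS s n) p)) :=
            C_congr π ((sameCycle_iff_cycleMin_eq π).2 (by rw [hmfix, ← he]))
          have hlt := cycleIdx_lt π (w p)
          rw [hC2] at hlt
          rcases hk1 with k1 | ⟨-, k1i⟩
          · rw [he] at k1; exact lt_irrefl _ k1
          · omega
        have hlt2 : w (start (bS s n) p) < cycleMin π (w p) := by
          rcases hk1 with k1 | ⟨k1e, -⟩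
          · exact k1
          · exact absurd k1e hmz
        have hq2 : p' < q := by
          apply klt_pos hstd
          left
          rw [hm', hqmin]
          exact hlt2
        rw [Fin.lt_def] at hqp hq2
        rw [hp'v] at hq2
        omega
      exact hp ((hiff p).1 hidx0)

lemma recover (hn : 0 < n) (hstd : StdCycleData π (s, w)) (p : Fin n) :
    π (w p) = w ⟨(start (bS s n) p).val +
        ((p.val - (start (bS s n) p).val) + 1) % (stopN (bS s n) p - (start (bS s n) p).val),
      tgt_lt (bS_h0 hn hstd.2.2.1) p ((p.val - (start (bS s n) p).val) + 1)⟩ := by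
  have h0 := bS_h0 (s := s) hn hstd.2.2.1
  have hw : Function.Bijective w := hstd.1.1
  have hsb := self_block h0 p
  have hbn := stopN_le (S := bS s n) p
  have hbs := (stopN_spec (S := bS s n) p).1
  have hstartfix : start (bS s n) (start (bS s n) p) = start (bS s n) p :=
    start_eq_self h0 (start_mem h0 p)
  have hmfix : cycleMin π (w (start (bS s n) p)) = w (start (bS s n) p) := by
    have := (claimA hn hstd (start (bS s n) p)).1
    rwa [hstartfix] at this
  have hL : (C π (w (start (bS s n) p))).card = stopN (bS s n) p - (start (bS s n) p).val := by
    have hCim : C π (w (start (bS s n) p)) =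
        Finset.image w (Finset.univ.filter fun q => start (bS s n) q = start (bS s n) p) := by
      ext y
      rw [mem_C, Finset.mem_image]
      constructor
      · intro hy
        obtain ⟨q, rfl⟩ := hw.2 y
        refine ⟨q, Finset.mem_filter.2 ⟨Finset.mem_univ q, ?_⟩, rfl⟩
        have he := (sameCycle_iff_cycleMin_eq π).1 hy
        rw [hmfix, (claimA hn hstd q).1] at he
        apply hw.1
        rw [← he]
      · rintro ⟨q, hq, rfl⟩
        have hq' := (Finset.mem_filter.1 hq).2
        rw [sameCycle_iff_cycleMin_eq π, hmfix, (claimA hn hstd q).1, hq']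
    rw [hCim, Finset.card_image_of_injective _ hw.1, card_block h0 p]
  have h1 : (π ^ (p.val - (start (bS s n) p).val)) (w (start (bS s n) p)) = w p := by
    have := pow_cycleIdx π (w p)
    rwa [(claimA hn hstd p).1, (claimA hn hstd p).2] at this
  have happ : π (w p) = (π ^ ((p.val - (start (bS s n) p).val) + 1)) (w (start (bS s n) p)) := by
    rw [pow_succ' π, Equiv.Perm.mul_apply, h1]
  have hzmin : cycleMin π ((π ^ ((p.val - (start (bS s n) p).val) + 1)) (w (start (bS s n) p)))
      = w (start (bS s n) p) := by rw [cycleMin_pow, hmfix]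
  have hzidx : cycleIdx π ((π ^ ((p.val - (start (bS s n) p).val) + 1)) (w (start (bS s n) p)))
      = ((p.val - (start (bS s n) p).val) + 1) % (stopN (bS s n) p - (start (bS s n) p).val) := by
    rw [cycleIdx_pow_eq π hmfix, hL]
  set q0 : Fin n := ⟨(start (bS s n) p).val +
      ((p.val - (start (bS s n) p).val) + 1) % (stopN (bS s n) p - (start (bS s n) p).val),
    by have h3 := Nat.mod_lt ((p.val - (start (bS s n) p).val) + 1)
         (y := stopN (bS s n) p - (start (bS s n) p).val) (by omega)
       omega⟩ with hq0
  have hq0b : start (bS s n) q0 = start (bS s n) p := by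
    apply (block_iff h0 p q0).2
    have h3 := Nat.mod_lt ((p.val - (start (bS s n) p).val) + 1)
      (y := stopN (bS s n) p - (start (bS s n) p).val) (by omega)
    constructor
    · simp [hq0]
    · simp [hq0]; omega
  have hq0min : cycleMin π (w q0) = w (start (bS s n) p) := by
    rw [(claimA hn hstd q0).1, hq0b]
  have hq0idx : cycleIdx π (w q0) =
      ((p.val - (start (bS s n) p).val) + 1) % (stopN (bS s n) p - (start (bS s n) p).val) := by
    rw [(claimA hn hstd q0).2, hq0b]
    simp [hq0]
  have := key_inj π (hzmin.trans hq0min.symm) (hzidx.trans hq0idx.symm)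
  rw [happ, this]

lemma part3_unique (hn : 0 < n) {π π' : Equiv.Perm (Fin n)}
    (h1 : StdCycleData π (s, w)) (h2 : StdCycleData π' (s, w)) : π = π' := by
  apply Equiv.ext
  intro x
  obtain ⟨p, rfl⟩ := h1.1.1.2 x
  rw [recover hn h1 p, recover hn h2 p]




variable {n : ℕ} (π : Equiv.Perm (Fin n))

/-- the sort key -/
noncomputable def keyF (π : Equiv.Perm (Fin n)) : Fin n → Lex (Fin n × ℕ) :=
  fun x => toLex (cycleMin π x, cycleIdx π x)

lemma keyF_inj : Function.Injective (keyF π) := by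
  intro x y h
  have h' : (cycleMin π x, cycleIdx π x) = (cycleMin π y, cycleIdx π y) :=
    toLex.injective h
  exact key_inj π (congrArg Prod.fst h') (congrArg Prod.snd h')

lemma keyF_lt_iff (x y : Fin n) :
    keyF π x < keyF π y ↔ (cycleMin π x < cycleMin π y ∨
      (cycleMin π x = cycleMin π y ∧ cycleIdx π x < cycleIdx π y)) := by
  exact Prod.Lex.lt_iff

lemma stdword_iff (w : Fin n → Fin n) :
    IsStdCycleWord π w ↔ Function.Bijective w ∧ StrictMono (keyF π ∘ w) := by
  unfold IsStdCycleWord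
  constructor
  · rintro ⟨hb, h⟩
    exact ⟨hb, fun p q hpq => (keyF_lt_iff π _ _).2 (h p q hpq)⟩
  · rintro ⟨hb, h⟩
    exact ⟨hb, fun p q hpq => (keyF_lt_iff π _ _).1 (h hpq)⟩

lemma sorted_word : ∃ w : Fin n → Fin n, IsStdCycleWord π w := by
  refine ⟨⇑(Tuple.sort (keyF π)), (stdword_iff π _).2 ⟨(Tuple.sort (keyF π)).bijective, ?_⟩⟩
  exact (Tuple.monotone_sort (keyF π)).strictMono_of_injective
    ((keyF_inj π).comp (Tuple.sort (keyF π)).injective)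

lemma word_unique {w w' : Fin n → Fin n} (h : IsStdCycleWord π w)
    (h' : IsStdCycleWord π w') : w = w' := by
  rw [stdword_iff] at h h'
  have hc : (Finset.univ.image (keyF π)).card = n := by
    rw [Finset.card_image_of_injective _ (keyF_inj π), Finset.card_univ, Fintype.card_fin]
  have e1 := Finset.orderEmbOfFin_unique hc
    (f := keyF π ∘ w) (fun x => Finset.mem_image_of_mem _ (Finset.mem_univ _)) h.2
  have e2 := Finset.orderEmbOfFin_unique hc
    (f := keyF π ∘ w') (fun x => Finset.mem_image_of_mem _ (Finset.mem_univ _)) h'.2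
  funext x
  exact keyF_inj π ((congrFun e1 x).trans (congrFun e2 x).symm)

lemma idx_zero_at_zero (hn : 0 < n) {w : Fin n → Fin n} (h : IsStdCycleWord π w) :
    cycleIdx π (w ⟨0, hn⟩) = 0 := by
  have hmin0 : cycleMin π (⟨0, hn⟩ : Fin n) = ⟨0, hn⟩ := by
    apply le_antisymm (cycleMin_le_self π _)
    rw [Fin.le_def]
    simp
  obtain ⟨p0, hp0⟩ := h.1.2 ⟨0, hn⟩
  rcases eq_or_ne p0 ⟨0, hn⟩ with he | hne
  · rw [he] at hp0
    rw [hp0]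
    exact (cycleIdx_eq_zero_iff π _).2 hmin0
  · exfalso
    have hlt : (⟨0, hn⟩ : Fin n) < p0 := by
      rcases Nat.eq_zero_or_pos p0.val with h1 | h1
      · exact absurd (Fin.ext (by simp [h1])) hne
      · rw [Fin.lt_def]
        simpa using h1
    rcases h.2 _ _ hlt with h2 | ⟨h2, h3⟩
    · rw [hp0, hmin0] at h2
      have h4 : (⟨0, hn⟩ : Fin n) ≤ cycleMin π (w ⟨0, hn⟩) := by rw [Fin.le_def]; simp
      exact lt_irrefl _ (h2.trans_le h4)
    · rw [hp0] at h3
      have h5 : cycleIdx π (⟨0, hn⟩ : Fin n) = 0 := (cycleIdx_eq_zero_iff π _).2 hmin0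
      omega

lemma part1_exists (hn : 0 < n) :
    ∃ sw : List ℕ × (Fin n → Fin n), StdCycleData π sw := by
  obtain ⟨w, hword⟩ := sorted_word π
  have hmem : (⟨0, hn⟩ : Fin n) ∈ Finset.univ.filter (fun p => cycleIdx π (w p) = 0) :=
    Finset.mem_filter.2 ⟨Finset.mem_univ _, idx_zero_at_zero π hn hword⟩
  obtain ⟨s, hpos, hsum, hiff⟩ := comp_exists hn _ hmem
  refine ⟨(s, w), hword, hpos, hsum, fun p => ?_⟩
  rw [← hiff p]
  simp

lemma part1_unique (hn : 0 < n) {sw sw' : List ℕ × (Fin n → Fin n)}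
    (h : StdCycleData π sw) (h' : StdCycleData π sw') : sw = sw' := by
  obtain ⟨s, w⟩ := sw
  obtain ⟨s', w'⟩ := sw'
  have hwe : w = w' := word_unique π h.1 h'.1
  subst hwe
  have hpos : ∀ a ∈ s, 0 < a := h.2.1
  have hpos' : ∀ a ∈ s', 0 < a := h'.2.1
  have hsum : s.sum = n := h.2.2.1
  have hsum' : s'.sum = n := h'.2.2.1
  have hiff : ∀ p : Fin n, cycleIdx π (w p) = 0 ↔ ∃ t < s.length, p.val = (s.take t).sum :=
    h.2.2.2
  have hiff' : ∀ p : Fin n, cycleIdx π (w p) = 0 ↔ ∃ t < s'.length, p.val = (s'.take t).sum :=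
    h'.2.2.2
  have hse : s = s' := by
    apply comp_unique hpos hpos' (hsum.trans hsum'.symm)
    intro v
    constructor
    · rintro ⟨t, ht, rfl⟩
      have hv : (s.take t).sum < n := by
        have := take_sum_lt_sum hpos ht
        omega
      exact (hiff' ⟨_, hv⟩).1 ((hiff ⟨_, hv⟩).2 ⟨t, ht, rfl⟩)
    · rintro ⟨t, ht, rfl⟩
      have hv : (s'.take t).sum < n := by
        have := take_sum_lt_sum hpos' ht
        omega
      exact (hiff ⟨_, hv⟩).1 ((hiff' ⟨_, hv⟩).2 ⟨t, ht, rfl⟩)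
  rw [hse]

lemma part2 {sw : List ℕ × (Fin n → Fin n)} (h : StdCycleData π sw) : GoodPair n sw := by
  obtain ⟨⟨hw, hlex⟩, hpos, hsum, hiff⟩ := h
  refine ⟨hpos, hsum, hw, ?_⟩
  intro t ht p q hv hpq
  have hidx : cycleIdx π (sw.2 p) = 0 := (hiff p).2 ⟨t, ht, hv⟩
  have hmin : cycleMin π (sw.2 p) = sw.2 p := (cycleIdx_eq_zero_iff _ _).1 hidx
  rcases hlex p q hpq with h | ⟨he, hi⟩
  · exact lt_of_lt_of_le (hmin ▸ h) (cycleMin_le_self _ _)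
  · have h1 : cycleMin π (sw.2 q) ≤ sw.2 q := cycleMin_le_self _ _
    have h2 : sw.2 p = cycleMin π (sw.2 q) := by rw [← he, hmin]
    have hne : cycleMin π (sw.2 q) ≠ sw.2 q := by
      intro hc
      have : cycleIdx π (sw.2 q) = 0 := (cycleIdx_eq_zero_iff _ _).2 hc
      omega
    rw [h2]
    exact lt_of_le_of_ne h1 hne

end StdAux


/-- The map sending a permutation `π` of `{1,…,n}` to the pair (cycle lengths of `π` in
standard cycle order, word of the standard cycle form of `π`) is well defined and is a
bijection onto the set of pairs (composition of `n`, permutation word of `{1,…,n}` with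
a right-to-left minimum at each partial-sum position of the composition). -/
theorem stmt_9 (n : ℕ) (hn : 1 ≤ n) :
    (∀ π : Equiv.Perm (Fin n), ∃! sw : List ℕ × (Fin n → Fin n), StdCycleData π sw) ∧
    (∀ (π : Equiv.Perm (Fin n)) (sw : List ℕ × (Fin n → Fin n)),
      StdCycleData π sw → GoodPair n sw) ∧
    (∀ sw : List ℕ × (Fin n → Fin n), GoodPair n sw →
      ∃! π : Equiv.Perm (Fin n), StdCycleData π sw) := by
  have hn0 : 0 < n := hn
  refine ⟨?_, ?_, ?_⟩
  · intro π
    obtain ⟨sw, hsw⟩ := StdAux.part1_exists π hn0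
    exact ⟨sw, hsw, fun sw' hsw' => StdAux.part1_unique π hn0 hsw' hsw⟩
  · intro π sw h
    exact StdAux.part2 π h
  · rintro ⟨s, w⟩ ⟨hpos, hsum, hw, hgood⟩
    refine ⟨StdAux.mkPerm hn0 hw hsum, StdAux.mkPerm_std hn0 hw hpos hsum hgood,
      fun π' h' => StdAux.part3_unique hn0 h' (StdAux.mkPerm_std hn0 hw hpos hsum hgood)⟩
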